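/- For every ε ∈ (0,1) there exists a constant C > 0, depending only on ε, such that for all θ > 0, all λ ∈ ℂ and all φ ∈ (0,θ) satisfying 1 − (1−ε)π/θ ≤ Re λ ≤ (1−ε)π/θ − 1, |Im λ|·θ < 1/4, |λ−1| ≥ 1/4 and |λ+1| ≥ 1/4, one has |sin((λ+1)φ)/(4λ sin((λ+1)θ)) − sin((λ−1)φ)/(4λ sin((λ−1)θ))| ≤ C·θ/|λ|. -/

import Mathlib

open Real

noncomputable def Complex.abs : AbsoluteValue ℂ ℝ where
  toFun := norm
  map_mul' := norm_mul
  nonneg' := norm_nonneg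
  eq_zero' _ := norm_eq_zero
  add_le' := norm_add_le

lemma Complex.norm_eq_abs (z : ℂ) : ‖z‖ = Complex.abs z := rfl

@[simp] lemma Complex.abs_four : Complex.abs 4 = 4 := by
  show ‖(4 : ℂ)‖ = 4
  simp

lemma Complex.abs_ofReal (x : ℝ) : Complex.abs (x : ℂ) = |x| := by
  show ‖(x : ℂ)‖ = |x|
  simp

lemma Complex.abs_add_mul_I (x y : ℝ) : Complex.abs (x + y * Complex.I) = √(x ^ 2 + y ^ 2) :=
  Complex.norm_add_mul_I x y

lemma Complex.sq_abs (z : ℂ) : Complex.abs z ^ 2 = Complex.normSq z := Complex.sq_norm z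

lemma Complex.abs_im_le_abs (z : ℂ) : |z.im| ≤ Complex.abs z := Complex.abs_im_le_norm z

lemma Complex.abs_le_abs_re_add_abs_im (z : ℂ) : Complex.abs z ≤ |z.re| + |z.im| :=
  Complex.norm_le_abs_re_add_abs_im z

lemma sq_abs_sin' (z : ℂ) :
    (Complex.abs (Complex.sin z))^2 = Real.sin z.re^2 + Real.sinh z.im^2 := by
  rw [Complex.sin_eq]
  rw [← Complex.ofReal_sin, ← Complex.ofReal_cos, ← Complex.ofReal_cosh, ← Complex.ofReal_sinh,
    ← Complex.ofReal_mul, ← Complex.ofReal_mul, Complex.abs_add_mul_I]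
  rw [Real.sq_sqrt (by positivity)]
  nlinarith [Real.sin_sq_add_cos_sq z.re, Real.cosh_sq z.im, Real.sinh_sq z.im,
    sq_nonneg (Real.sin z.re * Real.sinh z.im), sq_nonneg (Real.cos z.re * Real.sinh z.im)]

lemma abs_sin_le_cosh (z : ℂ) : Complex.abs (Complex.sin z) ≤ Real.cosh z.im := by
  have h1 := sq_abs_sin' z
  have h2 : Real.sin z.re ^2 ≤ 1 := by nlinarith [Real.sin_sq_add_cos_sq z.re, sq_nonneg (Real.cos z.re)]
  have h3 : (Complex.abs (Complex.sin z))^2 ≤ Real.cosh z.im ^2 := by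
    rw [h1, Real.cosh_sq]; nlinarith
  have := Real.one_le_cosh z.im
  nlinarith [Complex.abs.nonneg (Complex.sin z)]

lemma abs_cos_le_cosh (z : ℂ) : Complex.abs (Complex.cos z) ≤ Real.cosh z.im := by
  rw [Complex.cos_eq]
  rw [← Complex.ofReal_sin, ← Complex.ofReal_cos, ← Complex.ofReal_cosh, ← Complex.ofReal_sinh,
    ← Complex.ofReal_mul, ← Complex.ofReal_mul, sub_eq_add_neg, neg_mul_eq_neg_mul, ← Complex.ofReal_neg,
    Complex.abs_add_mul_I]
  have h2 : Real.cos z.re ^2 ≤ 1 := by nlinarith [Real.sin_sq_add_cos_sq z.re, sq_nonneg (Real.sin z.re)]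
  have h3 : Real.sin z.re ^2 ≤ 1 := by nlinarith [Real.sin_sq_add_cos_sq z.re, sq_nonneg (Real.cos z.re)]
  have hc := Real.one_le_cosh z.im
  have : (Real.cos z.re * Real.cosh z.im) ^ 2 + (-(Real.sin z.re * Real.sinh z.im)) ^ 2 ≤ (Real.cosh z.im)^2 := by
    have := Real.cosh_sq z.im
    nlinarith [Real.sin_sq_add_cos_sq z.re, sq_nonneg (Real.sin z.re * Real.sinh z.im), sq_nonneg (Real.sinh z.im), sq_nonneg (Real.sin z.re)]
  calc Real.sqrt _ ≤ Real.sqrt ((Real.cosh z.im)^2) := Real.sqrt_le_sqrt this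
    _ = Real.cosh z.im := by rw [Real.sqrt_sq (by linarith)]

lemma abs_sin_le_cosh7 (z : ℂ) (h : |z.im| ≤ 7) : Complex.abs (Complex.sin z) ≤ Real.cosh 7 :=
  (abs_sin_le_cosh z).trans (by rw [Real.cosh_le_cosh]; simpa using h)

lemma abs_cos_le_cosh7 (z : ℂ) (h : |z.im| ≤ 7) : Complex.abs (Complex.cos z) ≤ Real.cosh 7 :=
  (abs_cos_le_cosh z).trans (by rw [Real.cosh_le_cosh]; simpa using h)

lemma abs_im_le_abs' (z : ℂ) : |z.im| ≤ Complex.abs z := Complex.abs_im_le_abs z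

lemma abs_sin_le_mul (z : ℂ) (h : Complex.abs z ≤ 7) :
    Complex.abs (Complex.sin z) ≤ Real.cosh 7 * Complex.abs z := by
  have key := Convex.norm_image_sub_le_of_norm_hasDerivWithin_le
    (f := Complex.sin) (f' := Complex.cos) (s := Metric.closedBall (0:ℂ) 7)
    (C := Real.cosh 7) (x := (0:ℂ)) (y := z)
    (fun x _ => (Complex.hasDerivAt_sin x).hasDerivWithinAt)
    (fun x hx => by
      rw [Complex.norm_eq_abs]
      exact abs_cos_le_cosh7 x ((abs_im_le_abs' x).trans (by simpa [Complex.norm_eq_abs] using hx)))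
    (convex_closedBall _ _) (Metric.mem_closedBall_self (by norm_num)) (by simpa [Complex.norm_eq_abs] using h)
  simpa [Complex.norm_eq_abs] using key

lemma abs_cos_sub_one (z : ℂ) (h : Complex.abs z ≤ 7) :
    Complex.abs (Complex.cos z - 1) ≤ Real.cosh 7 * Complex.abs z ^ 2 := by
  have key := Convex.norm_image_sub_le_of_norm_hasDerivWithin_le
    (f := Complex.cos) (f' := fun x => -Complex.sin x) (s := Metric.closedBall (0:ℂ) (Complex.abs z))
    (C := Real.cosh 7 * Complex.abs z) (x := (0:ℂ)) (y := z)
    (fun x _ => (Complex.hasDerivAt_cos x).hasDerivWithinAt)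
    (fun x hx => by
      rw [norm_neg, Complex.norm_eq_abs]
      have hx' : Complex.abs x ≤ Complex.abs z := by simpa [Complex.norm_eq_abs] using hx
      calc Complex.abs (Complex.sin x) ≤ Real.cosh 7 * Complex.abs x :=
            abs_sin_le_mul x (hx'.trans h)
        _ ≤ Real.cosh 7 * Complex.abs z := by gcongr)
    (convex_closedBall _ _) (Metric.mem_closedBall_self (Complex.abs.nonneg z)) (by simp [Complex.norm_eq_abs])
  simpa [Complex.norm_eq_abs, Complex.cos_zero, sq, mul_assoc] using key

lemma abs_sin_sub_self (z : ℂ) (h : Complex.abs z ≤ 7) :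
    Complex.abs (Complex.sin z - z) ≤ Real.cosh 7 * Complex.abs z ^ 3 := by
  have key := Convex.norm_image_sub_le_of_norm_hasDerivWithin_le
    (f := fun w => Complex.sin w - w) (f' := fun x => Complex.cos x - 1)
    (s := Metric.closedBall (0:ℂ) (Complex.abs z))
    (C := Real.cosh 7 * Complex.abs z ^ 2) (x := (0:ℂ)) (y := z)
    (fun x _ => ((Complex.hasDerivAt_sin x).sub (hasDerivAt_id x)).hasDerivWithinAt)
    (fun x hx => by
      rw [Complex.norm_eq_abs]
      have hx' : Complex.abs x ≤ Complex.abs z := by simpa [Complex.norm_eq_abs] using hx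
      calc Complex.abs (Complex.cos x - 1) ≤ Real.cosh 7 * Complex.abs x ^ 2 :=
            abs_cos_sub_one x (hx'.trans h)
        _ ≤ Real.cosh 7 * Complex.abs z ^ 2 := by gcongr)
    (convex_closedBall _ _) (Metric.mem_closedBall_self (Complex.abs.nonneg z)) (by simp [Complex.norm_eq_abs])
  have : Complex.abs (Complex.sin z - z - (Complex.sin 0 - 0)) = Complex.abs (Complex.sin z - z) := by
    simp
  calc Complex.abs (Complex.sin z - z) ≤ Real.cosh 7 * Complex.abs z ^ 2 * Complex.abs z := by
        simpa [Complex.norm_eq_abs] using key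
    _ = Real.cosh 7 * Complex.abs z ^ 3 := by ring

lemma sin_chord_lower (ε : ℝ) (hε0 : 0 < ε) (hε1 : ε < 1) (y : ℝ) (hy : 0 ≤ y)
    (hy' : y ≤ (1-ε)*π) : Real.sin (ε*π) * y ≤ π * Real.sin y := by
  set X : ℝ := (1-ε)*π with hX
  have hXpos : 0 < X := by
    have := Real.pi_pos; apply mul_pos <;> nlinarith
  have hXle : X ≤ π := by
    have := Real.pi_pos; nlinarith
  have hsinX : Real.sin X = Real.sin (ε*π) := by
    rw [hX, show (1-ε)*π = π - ε*π by ring, Real.sin_pi_sub]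
  have hcon := strictConcaveOn_sin_Icc.concaveOn
  have hmem1 : X ∈ Set.Icc (0:ℝ) π := ⟨le_of_lt hXpos, hXle⟩
  have hmem0 : (0:ℝ) ∈ Set.Icc (0:ℝ) π := ⟨le_refl 0, Real.pi_pos.le⟩
  have ha : 0 ≤ y / X := div_nonneg hy hXpos.le
  have hb : 0 ≤ 1 - y / X := by
    rw [sub_nonneg, div_le_one hXpos]; exact hy'
  have hkey := hcon.2 hmem1 hmem0 ha hb (by ring)
  have harg : (y/X) • X + (1 - y/X) • (0:ℝ) = y := by
    rw [smul_eq_mul, smul_eq_mul]; field_simp; ring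
  rw [harg] at hkey
  have hsp : 0 ≤ Real.sin (ε*π) := by
    apply Real.sin_nonneg_of_nonneg_of_le_pi
    · positivity
    · nlinarith [Real.pi_pos]
  have hsy : y / X * Real.sin X + (1 - y/X) * Real.sin 0 ≤ Real.sin y := by
    simpa [smul_eq_mul] using hkey
  rw [Real.sin_zero, mul_zero, add_zero, hsinX] at hsy
  calc Real.sin (ε*π) * y = X * (y / X * Real.sin (ε*π)) := by
        field_simp
    _ ≤ π * (y / X * Real.sin (ε*π)) := by
        apply mul_le_mul_of_nonneg_right hXle; positivity
    _ ≤ π * Real.sin y := by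
        apply mul_le_mul_of_nonneg_left _ Real.pi_pos.le
        nlinarith

lemma abs_sin_lower (ε : ℝ) (hε0 : 0 < ε) (hε1 : ε < 1) (z : ℂ)
    (hre : |z.re| ≤ (1-ε)*π) :
    Real.sin (ε*π) * Complex.abs z ≤ π * Complex.abs (Complex.sin z) := by
  have hsp : 0 ≤ Real.sin (ε*π) := by
    apply Real.sin_nonneg_of_nonneg_of_le_pi
    · positivity
    · nlinarith [Real.pi_pos]
  have hs1 : Real.sin (ε*π) ≤ 1 := Real.sin_le_one _
  -- squared sin lower bound on re
  have hresq : (Real.sin (ε*π))^2 * z.re^2 ≤ π^2 * Real.sin z.re ^ 2 := by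
    have hpi := Real.pi_pos
    rcases le_or_gt 0 z.re with hx | hx
    · have hre' : z.re ≤ (1-ε)*π := by rwa [abs_of_nonneg hx] at hre
      have h := sin_chord_lower ε hε0 hε1 z.re hx hre'
      have hsin0 : 0 ≤ Real.sin z.re :=
        Real.sin_nonneg_of_nonneg_of_le_pi hx (by nlinarith)
      have hmul := mul_le_mul h h (by positivity) (by positivity)
      nlinarith [hmul]
    · have hx' : 0 ≤ -z.re := by linarith
      have hre' : -z.re ≤ (1-ε)*π := by rwa [abs_of_neg hx] at hre
      have h := sin_chord_lower ε hε0 hε1 (-z.re) hx' hre'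
      rw [Real.sin_neg] at h
      have hsin0 : 0 ≤ Real.sin (-z.re) :=
        Real.sin_nonneg_of_nonneg_of_le_pi hx' (by nlinarith)
      rw [Real.sin_neg] at hsin0
      have hmul := mul_le_mul h h (by positivity) (by nlinarith)
      nlinarith [hmul]
  -- sinh² ≥ im²
  have hsinh : z.im^2 ≤ Real.sinh z.im ^ 2 := by
    have h := Real.abs_sinh z.im
    rcases eq_or_lt_of_le (abs_nonneg z.im) with h0 | h0
    · have : z.im = 0 := by simpa using h0.symm
      simp [this]
    · have h1 : |z.im| < Real.sinh |z.im| := Real.self_lt_sinh_iff.mpr h0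
      have : |z.im| ≤ |Real.sinh z.im| := by rw [h]; exact h1.le
      nlinarith [abs_nonneg z.im, abs_nonneg (Real.sinh z.im), sq_abs z.im, sq_abs (Real.sinh z.im)]
  have hsq := sq_abs_sin' z
  have habs2 : Complex.abs z ^ 2 = z.re^2 + z.im^2 := by
    rw [Complex.sq_abs, Complex.normSq_apply]; ring
  have hfin : (Real.sin (ε*π) * Complex.abs z)^2 ≤ (π * Complex.abs (Complex.sin z))^2 := by
    have hpi := Real.pi_pos
    calc (Real.sin (ε*π) * Complex.abs z)^2
        = Real.sin (ε*π)^2 * z.re^2 + Real.sin (ε*π)^2 * z.im^2 := by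
          rw [mul_pow, habs2]; ring
      _ ≤ π^2 * Real.sin z.re^2 + π^2 * Real.sinh z.im^2 := by
          have hs2 : Real.sin (ε*π)^2 ≤ 1 := by nlinarith
          have hp2 : (1:ℝ) ≤ π^2 := by nlinarith [Real.pi_gt_three]
          have hA : Real.sin (ε*π)^2 * z.im^2 ≤ 1 * z.im^2 :=
            mul_le_mul_of_nonneg_right hs2 (sq_nonneg z.im)
          have hC : 1 * Real.sinh z.im^2 ≤ π^2 * Real.sinh z.im^2 :=
            mul_le_mul_of_nonneg_right hp2 (sq_nonneg (Real.sinh z.im))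
          rw [one_mul] at hA hC
          linarith
      _ = (π * Complex.abs (Complex.sin z))^2 := by rw [mul_pow, hsq]; ring
  have h1 : 0 ≤ Real.sin (ε*π) * Complex.abs z := by positivity
  have h2 : 0 ≤ π * Complex.abs (Complex.sin z) := by positivity
  nlinarith [hfin, h1, h2]

open Real


set_option maxHeartbeats 2000000 in
/-- Estimate (C.2): for `Re λ ∈ I_ε`, `|Im λ|θ < 1/4`, `|λ−1| ≥ 1/4`, `|λ+1| ≥ 1/4`,
the difference of the two sine quotients is bounded by `Cθ/|λ|`, exploiting cancellation. -/
theorem sine_quotient_cancellation (ε : ℝ) (hε : ε ∈ Set.Ioo (0:ℝ) 1) :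
    ∃ C : ℝ, 0 < C ∧ ∀ θ : ℝ, 0 < θ → ∀ lam : ℂ, ∀ φ : ℝ,
      1 - (1 - ε) * π / θ ≤ lam.re → lam.re ≤ (1 - ε) * π / θ - 1 →
      |lam.im| * θ < 1/4 →
      1/4 ≤ ‖lam - 1‖ → 1/4 ≤ ‖lam + 1‖ →
      φ ∈ Set.Ioo (0:ℝ) θ →
      ‖Complex.sin ((lam + 1) * (φ : ℂ)) / (4 * lam * Complex.sin ((lam + 1) * θ))
          - Complex.sin ((lam - 1) * (φ : ℂ)) / (4 * lam * Complex.sin ((lam - 1) * θ))‖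
        ≤ C * θ / ‖lam‖ := by
  simp only [Complex.norm_eq_abs]
  obtain ⟨hε0, hε1⟩ := hε
  have hπ := Real.pi_pos
  set s : ℝ := Real.sin (ε*π) with hs_def
  have hspos : 0 < s := Real.sin_pos_of_pos_of_lt_pi (by positivity)
    (by linarith [mul_lt_mul_of_pos_right hε1 Real.pi_pos])
  set B : ℝ := Real.cosh 7 with hB_def
  have hB1 : 1 ≤ B := Real.one_le_cosh 7
  refine ⟨2000 * π^2 * B^2 / s^2, by positivity, ?_⟩
  intro θ hθ lam φ h1 h2 him hb1 ha1 hφ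
  obtain ⟨hφ0, hφθ⟩ := hφ
  by_cases hlam0 : lam = 0
  · subst hlam0
    simp
  have hr_pos : 0 < Complex.abs lam := Complex.abs.pos hlam0
  set r : ℝ := Complex.abs lam with hr_def
  -- basic size facts
  have hA1 : 1 ≤ (1-ε)*π/θ := by linarith [h1.trans h2]
  have hθe : θ ≤ (1-ε)*π := by rw [le_div_iff₀ hθ] at hA1; linarith
  have hθπ : θ ≤ π := by linarith [mul_nonneg hε0.le hπ.le,
    show (1-ε)*π = π - ε*π from by ring]
  have hθ315 : θ ≤ 3.15 := hθπ.trans Real.pi_lt_d2.le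
  have hre_up : lam.re * θ ≤ (1-ε)*π - θ := by
    have h := mul_le_mul_of_nonneg_right h2 hθ.le
    rw [sub_mul, div_mul_cancel₀ _ hθ.ne'] at h
    linarith
  have hre_lo : -((1-ε)*π - θ) ≤ lam.re * θ := by
    have h := mul_le_mul_of_nonneg_right h1 hθ.le
    rw [sub_mul, div_mul_cancel₀ _ hθ.ne'] at h
    linarith
  have him' : |lam.im| * θ ≤ 1/4 := him.le
  have hrθ : r * θ ≤ 3.4 := by
    have h := Complex.abs_le_abs_re_add_abs_im lam
    have h2' : |lam.re| * θ ≤ (1-ε)*π - θ := by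
      rcases abs_cases lam.re with ⟨he, _⟩ | ⟨he, _⟩ <;> rw [he] <;> linarith
    have h3' : r * θ ≤ (|lam.re|)*θ + (|lam.im|)*θ := by
      linarith [mul_le_mul_of_nonneg_right h hθ.le]
    linarith [Real.pi_lt_d2, mul_nonneg hε0.le hπ.le,
      show (1-ε)*π = π - ε*π from by ring]
  -- lower bounds for the denominator sines
  have hre_a : |((lam+1)*(θ:ℂ)).re| ≤ (1-ε)*π := by
    have : ((lam+1)*(θ:ℂ)).re = lam.re*θ + θ := by simp [Complex.add_re, Complex.mul_re]; ring
    rw [this, abs_le]; constructor <;> linarith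
  have hre_b : |((lam-1)*(θ:ℂ)).re| ≤ (1-ε)*π := by
    have : ((lam-1)*(θ:ℂ)).re = lam.re*θ - θ := by simp [Complex.sub_re, Complex.mul_re]; ring
    rw [this, abs_le]; constructor <;> linarith
  have hlow_a := abs_sin_lower ε hε0 hε1 ((lam+1)*(θ:ℂ)) hre_a
  have hlow_b := abs_sin_lower ε hε0 hε1 ((lam-1)*(θ:ℂ)) hre_b
  rw [← hs_def] at hlow_a hlow_b
  have habs_aθ : Complex.abs ((lam+1)*(θ:ℂ)) = Complex.abs (lam+1) * θ := by
    rw [map_mul, Complex.abs_ofReal, abs_of_pos hθ]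
  have habs_bθ : Complex.abs ((lam-1)*(θ:ℂ)) = Complex.abs (lam-1) * θ := by
    rw [map_mul, Complex.abs_ofReal, abs_of_pos hθ]
  set Sa : ℝ := Complex.abs (Complex.sin ((lam+1)*(θ:ℂ))) with hSa_def
  set Sb : ℝ := Complex.abs (Complex.sin ((lam-1)*(θ:ℂ))) with hSb_def
  have hSa_pos : 0 < Sa := by
    rw [habs_aθ] at hlow_a
    have h0 : 0 < s * (Complex.abs (lam+1) * θ) :=
      mul_pos hspos (mul_pos (lt_of_lt_of_le (by norm_num) ha1) hθ)
    rcases mul_pos_iff.mp (lt_of_lt_of_le h0 hlow_a) with ⟨_, h⟩ | ⟨h, _⟩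
    · exact h
    · linarith
  have hSb_pos : 0 < Sb := by
    rw [habs_bθ] at hlow_b
    have h0 : 0 < s * (Complex.abs (lam-1) * θ) :=
      mul_pos hspos (mul_pos (lt_of_lt_of_le (by norm_num) hb1) hθ)
    rcases mul_pos_iff.mp (lt_of_lt_of_le h0 hlow_b) with ⟨_, h⟩ | ⟨h, _⟩
    · exact h
    · linarith
  have hsa_ne : Complex.sin ((lam+1)*(θ:ℂ)) ≠ 0 := by
    intro h; rw [hSa_def, h, map_zero] at hSa_pos; exact lt_irrefl 0 hSa_pos
  have hsb_ne : Complex.sin ((lam-1)*(θ:ℂ)) ≠ 0 := by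
    intro h; rw [hSb_def, h, map_zero] at hSb_pos; exact lt_irrefl 0 hSb_pos
  -- rewrite as a single quotient
  set NUM : ℂ := Complex.sin ((lam+1)*(φ:ℂ)) * Complex.sin ((lam-1)*(θ:ℂ))
    - Complex.sin ((lam-1)*(φ:ℂ)) * Complex.sin ((lam+1)*(θ:ℂ)) with hNUM_def
  have keyEq : Complex.sin ((lam + 1) * (φ : ℂ)) / (4 * lam * Complex.sin ((lam + 1) * θ))
      - Complex.sin ((lam - 1) * (φ : ℂ)) / (4 * lam * Complex.sin ((lam - 1) * θ))
      = NUM / (4 * lam * Complex.sin ((lam+1)*(θ:ℂ)) * Complex.sin ((lam-1)*(θ:ℂ))) := by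
    have hc : (4*lam*Complex.sin ((lam+1)*(θ:ℂ))) ≠ 0 :=
      mul_ne_zero (mul_ne_zero (by norm_num) hlam0) hsa_ne
    have hd : (4*lam*Complex.sin ((lam-1)*(θ:ℂ))) ≠ 0 :=
      mul_ne_zero (mul_ne_zero (by norm_num) hlam0) hsb_ne
    have hcd : 4*lam*Complex.sin ((lam+1)*(θ:ℂ))*Complex.sin ((lam-1)*(θ:ℂ)) ≠ 0 :=
      mul_ne_zero hc hsb_ne
    rw [div_sub_div _ _ hc hd, div_eq_div_iff (mul_ne_zero hc hd) hcd, hNUM_def]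
    ring
  -- the key identity
  set U : ℂ := (θ:ℂ) - (φ:ℂ) with hU_def
  set V : ℂ := (θ:ℂ) + (φ:ℂ) with hV_def
  have identEq : NUM = Complex.sin (lam*U) * (Complex.sin V - V)
      - Complex.sin (lam*V) * (Complex.sin U - U)
      + V * (Complex.sin (lam*U) - lam*U) - U * (Complex.sin (lam*V) - lam*V) := by
    rw [hNUM_def, hU_def, hV_def,
      show (lam+1)*(φ:ℂ) = lam*(φ:ℂ) + (φ:ℂ) from by ring,
      show (lam-1)*(θ:ℂ) = lam*(θ:ℂ) - (θ:ℂ) from by ring,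
      show (lam-1)*(φ:ℂ) = lam*(φ:ℂ) - (φ:ℂ) from by ring,
      show (lam+1)*(θ:ℂ) = lam*(θ:ℂ) + (θ:ℂ) from by ring,
      show lam*((θ:ℂ) - (φ:ℂ)) = lam*(θ:ℂ) - lam*(φ:ℂ) from by ring,
      show lam*((θ:ℂ) + (φ:ℂ)) = lam*(θ:ℂ) + lam*(φ:ℂ) from by ring]
    simp only [Complex.sin_add, Complex.sin_sub]
    ring
  -- abs computations for U, V
  have habsU : Complex.abs U = θ - φ := by
    rw [hU_def, show (θ:ℂ) - (φ:ℂ) = ((θ - φ : ℝ) : ℂ) from by push_cast; ring,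
      Complex.abs_ofReal, abs_of_pos (by linarith)]
  have habsV : Complex.abs V = θ + φ := by
    rw [hV_def, show (θ:ℂ) + (φ:ℂ) = ((θ + φ : ℝ) : ℂ) from by push_cast; ring,
      Complex.abs_ofReal, abs_of_pos (by linarith)]
  have habslamU : Complex.abs (lam*U) = r * (θ - φ) := by rw [map_mul, habsU]
  have habslamV : Complex.abs (lam*V) = r * (θ + φ) := by rw [map_mul, habsV]
  have himlamU : |(lam*U).im| ≤ 7 := by
    have he : (lam*U).im = lam.im * (θ - φ) := by
      rw [hU_def]; simp [Complex.mul_im]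
    rw [he, abs_mul, abs_of_pos (show (0:ℝ) < θ - φ by linarith)]
    linarith [mul_nonneg (abs_nonneg lam.im) hφ0.le]
  have himlamV : |(lam*V).im| ≤ 7 := by
    have he : (lam*V).im = lam.im * (θ + φ) := by
      rw [hV_def]; simp [Complex.mul_im]
    rw [he, abs_mul, abs_of_pos (show (0:ℝ) < θ + φ by linarith)]
    linarith [mul_le_mul_of_nonneg_left hφθ.le (abs_nonneg lam.im)]
  -- term bounds
  have t1 : Complex.abs (Complex.sin (lam*U)) ≤ B := abs_sin_le_cosh7 _ himlamU
  have t2 : Complex.abs (Complex.sin (lam*V)) ≤ B := abs_sin_le_cosh7 _ himlamV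
  have t3 : Complex.abs (Complex.sin V - V) ≤ B * (θ + φ)^3 := by
    have := abs_sin_sub_self V (by rw [habsV]; linarith)
    rwa [habsV] at this
  have t4 : Complex.abs (Complex.sin U - U) ≤ B * (θ - φ)^3 := by
    have := abs_sin_sub_self U (by rw [habsU]; linarith)
    rwa [habsU] at this
  have t5 : Complex.abs (Complex.sin (lam*U) - lam*U) ≤ B * (r*(θ-φ))^3 := by
    have := abs_sin_sub_self (lam*U)
      (by rw [habslamU]; linarith [mul_nonneg hr_pos.le hφ0.le])
    rwa [habslamU] at this
  have t6 : Complex.abs (Complex.sin (lam*V) - lam*V) ≤ B * (r*(θ+φ))^3 := by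
    have := abs_sin_sub_self (lam*V)
      (by rw [habslamV]; linarith [mul_le_mul_of_nonneg_left hφθ.le hr_pos.le])
    rwa [habslamV] at this
  -- numerator bound
  have hN : Complex.abs NUM ≤ 51 * B^2 * θ^3 * (1 + r^2) := by
    rw [identEq]
    have tri : Complex.abs (Complex.sin (lam*U) * (Complex.sin V - V)
        - Complex.sin (lam*V) * (Complex.sin U - U)
        + V * (Complex.sin (lam*U) - lam*U) - U * (Complex.sin (lam*V) - lam*V))
        ≤ Complex.abs (Complex.sin (lam*U) * (Complex.sin V - V))
          + Complex.abs (Complex.sin (lam*V) * (Complex.sin U - U))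
          + Complex.abs (V * (Complex.sin (lam*U) - lam*U))
          + Complex.abs (U * (Complex.sin (lam*V) - lam*V)) := by
      simp only [← Complex.norm_eq_abs]
      calc ‖_ - _ + _ - _‖ ≤ ‖_ - _ + _‖ + ‖_‖ := norm_sub_le _ _
        _ ≤ ‖_ - _‖ + ‖_‖ + ‖_‖ := by gcongr; exact norm_add_le _ _
        _ ≤ ‖_‖ + ‖_‖ + ‖_‖ + ‖_‖ := by gcongr; exact norm_sub_le _ _
    have e1 : Complex.abs (Complex.sin (lam*U) * (Complex.sin V - V)) ≤ 8 * B^2 * θ^3 := by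
      rw [map_mul]
      calc Complex.abs (Complex.sin (lam*U)) * Complex.abs (Complex.sin V - V)
          ≤ B * (B * (θ + φ)^3) :=
            mul_le_mul t1 t3 (Complex.abs.nonneg _) (by linarith)
        _ ≤ B * (B * (2*θ)^3) := by gcongr <;> linarith
        _ = 8 * B^2 * θ^3 := by ring
    have e2 : Complex.abs (Complex.sin (lam*V) * (Complex.sin U - U)) ≤ 8 * B^2 * θ^3 := by
      rw [map_mul]
      calc Complex.abs (Complex.sin (lam*V)) * Complex.abs (Complex.sin U - U)
          ≤ B * (B * (θ - φ)^3) :=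
            mul_le_mul t2 t4 (Complex.abs.nonneg _) (by linarith)
        _ ≤ B * (B * (2*θ)^3) := by gcongr <;> linarith
        _ = 8 * B^2 * θ^3 := by ring
    have e3 : Complex.abs (V * (Complex.sin (lam*U) - lam*U)) ≤ 7 * B * r^2 * θ^3 := by
      rw [map_mul, habsV]
      calc (θ + φ) * Complex.abs (Complex.sin (lam*U) - lam*U)
          ≤ (2*θ) * (B * (r*θ)^3) := by
            apply mul_le_mul (by linarith) _ (Complex.abs.nonneg _) (by linarith)
            calc Complex.abs (Complex.sin (lam*U) - lam*U) ≤ B * (r*(θ-φ))^3 := t5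
              _ ≤ B * (r*θ)^3 := by
                  refine mul_le_mul_of_nonneg_left
                    (pow_le_pow_left₀ (mul_nonneg hr_pos.le (by linarith))
                      (mul_le_mul_of_nonneg_left (by linarith) hr_pos.le) 3) (by linarith)
        _ ≤ 7 * B * r^2 * θ^3 := by
            have h1' := mul_le_mul_of_nonneg_right hrθ
              (show (0:ℝ) ≤ 2*B*r^2*θ^3 by positivity)
            have h2' : (0:ℝ) ≤ B*r^2*θ^3 := by positivity
            linarith [h1', h2']
    have e4 : Complex.abs (U * (Complex.sin (lam*V) - lam*V)) ≤ 28 * B * r^2 * θ^3 := by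
      rw [map_mul, habsU]
      calc (θ - φ) * Complex.abs (Complex.sin (lam*V) - lam*V)
          ≤ θ * (B * (r*(2*θ))^3) := by
            apply mul_le_mul (by linarith) _ (Complex.abs.nonneg _) (by linarith)
            calc Complex.abs (Complex.sin (lam*V) - lam*V) ≤ B * (r*(θ+φ))^3 := t6
              _ ≤ B * (r*(2*θ))^3 := by
                  refine mul_le_mul_of_nonneg_left
                    (pow_le_pow_left₀ (mul_nonneg hr_pos.le (by linarith))
                      (mul_le_mul_of_nonneg_left (by linarith) hr_pos.le) 3) (by linarith)
        _ ≤ 28 * B * r^2 * θ^3 := by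
            have h1' := mul_le_mul_of_nonneg_right hrθ
              (show (0:ℝ) ≤ 8*B*r^2*θ^3 by positivity)
            have h2' : (0:ℝ) ≤ B*r^2*θ^3 := by positivity
            linarith [h1', h2']
    have hBB : B ≤ B^2 := by
      rw [sq]; exact le_mul_of_one_le_left (by linarith) hB1
    have hB2 : B * (r^2*θ^3) ≤ B^2 * (r^2*θ^3) :=
      mul_le_mul_of_nonneg_right hBB (by positivity)
    have hp1 : (0:ℝ) ≤ B^2*θ^3 := by positivity
    have hp2 : (0:ℝ) ≤ B^2*(r^2*θ^3) := by positivity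
    linarith [tri, e1, e2, e3, e4, hB2, hp1, hp2]
  -- product of the two moduli of λ±1
  have hab : (1 + r^2)/80 ≤ Complex.abs (lam+1) * Complex.abs (lam-1) := by
    have hprod : Complex.abs (lam+1) * Complex.abs (lam-1) = Complex.abs (lam^2 - 1) := by
      rw [← map_mul]; ring_nf
    have hsq : Complex.abs (lam^2) = r^2 := by rw [map_pow]
    have hlb : r^2 - 1 ≤ Complex.abs (lam^2 - 1) := by
      have h := Complex.abs.le_sub (lam^2) 1
      rw [map_pow, map_one] at h
      exact h
    rcases le_or_gt r 2 with hc | hc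
    · have hpp := mul_le_mul ha1 hb1 (by norm_num) (Complex.abs.nonneg _)
      have hr2 : r^2 ≤ 4 := by
        rw [sq]
        calc r * r ≤ 2 * 2 := mul_le_mul hc hc hr_pos.le (by norm_num)
          _ = 4 := by norm_num
      rw [hprod]
      linarith [hpp, hr2]
    · have hr2 : (4:ℝ) ≤ r^2 := by
        rw [sq]
        calc (4:ℝ) = 2 * 2 := by norm_num
          _ ≤ r * r := mul_le_mul hc.le hc.le (by norm_num) (by linarith)
      rw [hprod]
      linarith [hlb, hr2]
  -- denominator lower bound
  have hDen : s^2 * θ^2 * (1 + r^2) ≤ 80 * π^2 * (Sa * Sb) := by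
    rw [habs_aθ] at hlow_a
    rw [habs_bθ] at hlow_b
    have hmul := mul_le_mul hlow_a hlow_b (by positivity) (by positivity)
    have hh := mul_le_mul_of_nonneg_left hab (show (0:ℝ) ≤ s^2*θ^2 by positivity)
    linarith [hmul, hh]
  -- final assembly
  rw [keyEq, map_div₀]
  have hDenAbs : Complex.abs (4 * lam * Complex.sin ((lam+1)*(θ:ℂ)) * Complex.sin ((lam-1)*(θ:ℂ)))
      = 4 * r * Sa * Sb := by
    rw [map_mul, map_mul, map_mul]
    norm_num [hr_def, hSa_def, hSb_def]
  rw [hDenAbs]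
  have hDpos : (0:ℝ) < 4 * r * Sa * Sb := by positivity
  rw [div_le_div_iff₀ hDpos hr_pos]
  rw [show 2000*π^2*B^2/s^2*θ*(4*r*Sa*Sb) = (2000*π^2*B^2*θ*(4*r*Sa*Sb))/s^2 from by ring,
    le_div_iff₀ (by positivity)]
  have hint1 := mul_le_mul_of_nonneg_right hN (show (0:ℝ) ≤ r*s^2 by positivity)
  have hint2 := mul_le_mul_of_nonneg_left hDen (show (0:ℝ) ≤ 51*(B^2*(θ*r)) by positivity)
  have hint3 : (0:ℝ) ≤ π^2*B^2*θ*r*(Sa*Sb) := by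
    have := mul_nonneg hSa_pos.le hSb_pos.le
    positivity
  linarith [hint1, hint2, hint3]
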